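/- Let ρ be an n × n Hermitian complex matrix, let f : Fin n → ℝ, and let ρ̂ = Σ_{r ∈ range f} P_r ρ P_r be the Lüders mixture, where P_r is the diagonal projection with (i,i) entry 1 if f(i) = r and 0 otherwise. Then the increase in quantum logical entropy equals the sum of the absolute squares of the zeroed (decohered) entries: h(ρ̂) − h(ρ) = (1 − trace(ρ̂²)) − (1 − trace(ρ²)) = Σ_{(j,k) : f(j) ≠ f(k)} |ρ_{jk}|². -/

import Mathlib

open Matrix

/-- The increase in quantum logical entropy h(ρ) = 1 − tr(ρ²) under the Lüders
mixture operation equals the sum of the absolute squares of the zeroed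
(decohered) off-diagonal entries, i.e. those ρ_{jk} with f(j) ≠ f(k). -/
theorem luders_logical_entropy_increase {n : ℕ} (ρ : Matrix (Fin n) (Fin n) ℂ)
    (hρ : ρ.IsHermitian) (f : Fin n → ℝ) :
    let P : ℝ → Matrix (Fin n) (Fin n) ℂ := fun r =>
      Matrix.of fun i j => if i = j ∧ f i = r then 1 else 0
    let ρhat : Matrix (Fin n) (Fin n) ℂ :=
      ∑ r ∈ Finset.univ.image f, P r * ρ * P r
    (1 - (ρhat * ρhat).trace) - (1 - (ρ * ρ).trace) =
      ((∑ j, ∑ k, if f j ≠ f k then ‖ρ j k‖ ^ 2 else 0 : ℝ) : ℂ) := by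
  intro P ρhat
  have hentry : ∀ j k, ρhat j k = if f j = f k then ρ j k else 0 := by
    intro j k
    have h1 : ∀ r, (P r * ρ * P r) j k =
        (if f j = r then (1:ℂ) else 0) * ρ j k * (if f k = r then 1 else 0) := by
      intro r
      simp [P, Matrix.mul_apply, Finset.sum_ite_eq, ite_and, Finset.mul_sum,
        mul_comm, mul_assoc, mul_left_comm]
    rw [show ρhat j k = ∑ r ∈ Finset.univ.image f, (P r * ρ * P r) j k by
      simp [ρhat, Matrix.sum_apply]]
    simp only [h1]
    by_cases h : f j = f k
    · rw [Finset.sum_eq_single (f j)]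
      · simp [h]
      · intro r hr hne; simp [Ne.symm hne]
      · intro h'; exact absurd (Finset.mem_image_of_mem f (Finset.mem_univ j)) h'
    · rw [if_neg h]
      apply Finset.sum_eq_zero
      intro r hr
      by_cases hj : f j = r
      · have hk : ¬ f k = r := fun hk => h (hj.trans hk.symm)
        simp [hk]
      · simp [hj]
  have htr : (ρhat * ρhat).trace = ∑ j, ∑ k, if f j = f k then ρ j k * ρ k j else 0 := by
    rw [Matrix.trace]
    simp only [Matrix.diag, Matrix.mul_apply, hentry]
    apply Finset.sum_congr rfl; intro j _
    apply Finset.sum_congr rfl; intro k _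
    by_cases h : f j = f k
    · rw [if_pos h, if_pos h.symm, if_pos h]
    · rw [if_neg h, if_neg (fun hk => h hk.symm), if_neg h, zero_mul]
  have htr2 : (ρ * ρ).trace = ∑ j, ∑ k, ρ j k * ρ k j := by
    simp [Matrix.trace, Matrix.diag, Matrix.mul_apply]
  have hsq : ∀ j k, ρ j k * ρ k j = ((‖ρ j k‖ ^ 2 : ℝ) : ℂ) := by
    intro j k
    have hkj : ρ k j = star (ρ j k) := by
      conv_lhs => rw [← hρ]
      rfl
    rw [hkj, Complex.star_def, Complex.mul_conj, Complex.sq_norm]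
  have hlhs : (1 - (ρhat * ρhat).trace) - (1 - (ρ * ρ).trace)
      = (ρ * ρ).trace - (ρhat * ρhat).trace := by ring
  rw [hlhs, htr, htr2, ← Finset.sum_sub_distrib]
  rw [show ((∑ j, ∑ k, if f j ≠ f k then ‖ρ j k‖ ^ 2 else 0 : ℝ) : ℂ)
      = ∑ j, ∑ k, if f j ≠ f k then ((‖ρ j k‖ ^ 2 : ℝ) : ℂ) else 0 by
    push_cast [apply_ite (fun x : ℝ => (x : ℂ))]
    rfl]
  apply Finset.sum_congr rfl; intro j _
  rw [← Finset.sum_sub_distrib]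
  apply Finset.sum_congr rfl; intro k _
  by_cases h : f j = f k
  · simp [h]
  · simp [h, hsq]
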